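/- Let S ∈ (1/2)ℕ, S ≥ 1/2, q ∈ (0,1), Δ = (q + q⁻¹)/2. The spin-S two-site kink Hamiltonian h_S(Δ) = S²·𝟙⊗𝟙 − S³⊗S³ − Δ⁻¹(S¹⊗S¹ + S²⊗S²) + S√(1 − 1/Δ²)(S³⊗𝟙 − 𝟙⊗S³) is a Hermitian positive semidefinite operator on ℂ^{2S+1}⊗ℂ^{2S+1}. -/

import Mathlib

open Matrix Kronecker ComplexOrder

noncomputable section

/-- The spin value `S = N/2`, where `N = 2S ∈ ℕ`. -/
def Sval (N : ℕ) : ℝ := (N : ℝ) / 2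

/-- The magnetic quantum number `m = S − k` of the basis vector indexed by
`k ∈ {0,…,N}` (so `k = S − m`). -/
def mval (N : ℕ) (k : Fin (N + 1)) : ℝ := Sval N - (k : ℕ)

/-- The spin-S matrix `S³`: diagonal with `S³|m⟩ = m|m⟩`. -/
def S3S (N : ℕ) : Matrix (Fin (N + 1)) (Fin (N + 1)) ℂ :=
  Matrix.diagonal fun k => ((mval N k : ℝ) : ℂ)

/-- The spin-S raising operator `S⁺|m⟩ = √(S(S+1) − m(m+1)) |m+1⟩`. -/
def SplusS (N : ℕ) : Matrix (Fin (N + 1)) (Fin (N + 1)) ℂ :=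
  fun k' k =>
    if (k' : ℕ) + 1 = (k : ℕ) then
      ((Real.sqrt (Sval N * (Sval N + 1) - mval N k * (mval N k + 1)) : ℝ) : ℂ)
    else 0

/-- The spin-S lowering operator `S⁻|m⟩ = √(S(S+1) − m(m−1)) |m−1⟩`. -/
def SminusS (N : ℕ) : Matrix (Fin (N + 1)) (Fin (N + 1)) ℂ :=
  fun k' k =>
    if (k' : ℕ) = (k : ℕ) + 1 then
      ((Real.sqrt (Sval N * (Sval N + 1) - mval N k * (mval N k - 1)) : ℝ) : ℂ)
    else 0

/-- The spin-S matrix `S¹ = (S⁺ + S⁻)/2`. -/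
def S1S (N : ℕ) : Matrix (Fin (N + 1)) (Fin (N + 1)) ℂ :=
  (1 / 2 : ℂ) • (SplusS N + SminusS N)

/-- The spin-S matrix `S² = (S⁺ − S⁻)/(2i)`. -/
def S2S (N : ℕ) : Matrix (Fin (N + 1)) (Fin (N + 1)) ℂ :=
  (1 / (2 * Complex.I)) • (SplusS N - SminusS N)

/-- The anisotropy `Δ = (q + q⁻¹)/2`. -/
def Delta (q : ℝ) : ℝ := (q + q⁻¹) / 2

/-- The spin-S two-site kink Hamiltonian
`h_S(Δ) = S²·𝟙⊗𝟙 − S³⊗S³ − Δ⁻¹(S¹⊗S¹ + S²⊗S²) + S√(1 − 1/Δ²)(S³⊗𝟙 − 𝟙⊗S³)`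
on `ℂ^{2S+1}⊗ℂ^{2S+1}`. -/
def hSpin (N : ℕ) (q : ℝ) :
    Matrix (Fin (N + 1) × Fin (N + 1)) (Fin (N + 1) × Fin (N + 1)) ℂ :=
  ((Sval N : ℂ) ^ 2) • (1 : Matrix (Fin (N + 1) × Fin (N + 1)) (Fin (N + 1) × Fin (N + 1)) ℂ)
    - S3S N ⊗ₖ S3S N - ((Delta q : ℂ))⁻¹ • (S1S N ⊗ₖ S1S N + S2S N ⊗ₖ S2S N)
    + ((Sval N * Real.sqrt (1 - 1 / (Delta q) ^ 2) : ℝ) : ℂ) •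
        (S3S N ⊗ₖ (1 : Matrix (Fin (N + 1)) (Fin (N + 1)) ℂ)
          - (1 : Matrix (Fin (N + 1)) (Fin (N + 1)) ℂ) ⊗ₖ S3S N)


set_option linter.unusedTactic false
set_option linter.unreachableTactic false
set_option linter.unnecessarySeqFocus false
set_option linter.unusedVariables false


lemma key {n : Type*} [Fintype n] [DecidableEq n]
    (M : Matrix n n ℂ) (r : n → n → ℝ) (ψ : n → ℝ)
    (hMr : ∀ i j, M i j = (r i j : ℂ))
    (hsym : ∀ i j, r i j = r j i)
    (hoff : ∀ i j, i ≠ j → r i j ≤ 0)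
    (hψ : ∀ i, 0 < ψ i)
    (hker : ∀ i, ∑ j, r i j * ψ j = 0) :
    M.PosSemidef := by
  rw [Matrix.posSemidef_iff_dotProduct_mulVec]
  constructor
  · ext i j
    simp only [Matrix.conjTranspose_apply, hMr, Complex.star_def, Complex.conj_ofReal]
    rw [hsym]
  · intro x
    have hQ : star x ⬝ᵥ M *ᵥ x = ∑ i, ∑ j, (r i j : ℂ) * (star (x i) * x j) := by
      simp only [dotProduct, Matrix.mulVec, Pi.star_apply, Finset.mul_sum, hMr]
      congr 1; ext i; congr 1; ext j; ring
    rw [hQ]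
    set z : ℂ := ∑ i, ∑ j, (r i j : ℂ) * (star (x i) * x j) with hz
    have him : z.im = 0 := by
      have h1 : z.im = ∑ i, ∑ j, r i j * (star (x i) * x j).im := by
        rw [hz, Complex.im_sum]
        refine Finset.sum_congr rfl fun i _ => ?_
        rw [Complex.im_sum]
        refine Finset.sum_congr rfl fun j _ => ?_
        simp [Complex.mul_im]
      have h2 : (∑ i, ∑ j, r i j * (star (x i) * x j).im)
          = -(∑ i, ∑ j, r i j * (star (x i) * x j).im) := by
        conv_lhs => rw [Finset.sum_comm]
        rw [← Finset.sum_neg_distrib]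
        refine Finset.sum_congr rfl fun j _ => ?_
        rw [← Finset.sum_neg_distrib]
        refine Finset.sum_congr rfl fun i _ => ?_
        rw [hsym j i]
        have : (star (x j) * x i).im = -(star (x i) * x j).im := by
          simp only [Complex.star_def, Complex.mul_im, Complex.conj_re, Complex.conj_im]
          ring
        rw [this]; ring
      rw [h1]; linarith
    -- real part
    have hre : 0 ≤ z.re := by
      have h1 : z.re = ∑ i, ∑ j, r i j * (star (x i) * x j).re := by
        rw [hz, Complex.re_sum]
        refine Finset.sum_congr rfl fun i _ => ?_
        rw [Complex.re_sum]
        refine Finset.sum_congr rfl fun j _ => ?_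
        simp [Complex.mul_re]
      rw [h1]
      set nrm : n → ℝ := fun i => ‖x i‖ with hnrm
      have hRdiag : ∀ i, (star (x i) * x i).re = nrm i ^ 2 := by
        intro i
        simp only [Complex.star_def, Complex.mul_re, Complex.conj_re, Complex.conj_im, hnrm]
        rw [Complex.sq_norm, Complex.normSq_apply]; ring
      have hRbound : ∀ i j, (star (x i) * x j).re ≤ nrm i * nrm j := by
        intro i j
        calc (star (x i) * x j).re ≤ ‖star (x i) * x j‖ := Complex.re_le_norm _
          _ = nrm i * nrm j := by
            simp only [Complex.star_def, hnrm]
            rw [norm_mul, Complex.norm_conj]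
      have hsplit : ∀ i j, r i j * (star (x i) * x j).re
          ≥ (if i = j then r i i * nrm i ^ 2 else 0)
            + (if i = j then 0 else r i j * (nrm i * nrm j)) := by
        intro i j
        by_cases h : i = j
        · subst h; rw [hRdiag i]; simp
        · simp only [if_neg h]
          have := mul_le_mul_of_nonpos_left (hRbound i j) (hoff i j h)
          linarith
      have hstep : (∑ i, ∑ j, r i j * (star (x i) * x j).re)
          ≥ ∑ i, ∑ j, ((if i = j then r i i * nrm i ^ 2 else 0)
            + (if i = j then 0 else r i j * (nrm i * nrm j))) := by
        refine Finset.sum_le_sum fun i _ => Finset.sum_le_sum fun j _ => hsplit i j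
      refine le_trans ?_ hstep
      have hdiag : ∀ i, r i i * nrm i ^ 2
          = ∑ j, (if i = j then 0 else (-(r i j)) * (ψ j * nrm i ^ 2 / ψ i)) := by
        intro i
        have hk := hker i
        have hptw : ∀ j, r i j * ψ j
            = (if i = j then r i j * ψ j else 0) + (if i = j then 0 else r i j * ψ j) :=
          fun j => by by_cases h : i = j <;> simp [h]
        rw [Finset.sum_congr rfl fun j _ => hptw j, Finset.sum_add_distrib,
          Finset.sum_ite_eq] at hk
        simp only [Finset.mem_univ, if_pos] at hk
        have hrii : r i i * ψ i = ∑ j, (if i = j then 0 else -(r i j) * ψ j) := by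
          have : ∑ j, (if i = j then 0 else -(r i j) * ψ j)
              = -∑ j, (if i = j then 0 else r i j * ψ j) := by
            rw [← Finset.sum_neg_distrib]
            exact Finset.sum_congr rfl fun j _ => by by_cases h : i = j <;> simp [h]
          rw [this]; linarith
        have hψi := hψ i
        have : r i i * nrm i ^ 2 = (r i i * ψ i) * (nrm i ^ 2 / ψ i) := by
          field_simp
        rw [this, hrii, Finset.sum_mul]
        exact Finset.sum_congr rfl fun j _ => by by_cases h : i = j <;> simp [h] <;> ring
      have hcollect : (∑ i, ∑ j, ((if i = j then r i i * nrm i ^ 2 else 0)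
            + (if i = j then 0 else r i j * (nrm i * nrm j))))
          = ∑ i, ∑ j, (if i = j then 0 else
              (-(r i j)) * (ψ j * nrm i ^ 2 / ψ i) + r i j * (nrm i * nrm j)) := by
        refine Finset.sum_congr rfl fun i _ => ?_
        rw [Finset.sum_add_distrib, Finset.sum_ite_eq]
        simp only [Finset.mem_univ, if_pos]
        rw [hdiag i, ← Finset.sum_add_distrib]
        exact Finset.sum_congr rfl fun j _ => by by_cases h : i = j <;> simp [h]
      rw [hcollect]
      -- symmetrization
      set F : n → n → ℝ := fun i j => (if i = j then 0 else
          (-(r i j)) * (ψ j * nrm i ^ 2 / ψ i) + r i j * (nrm i * nrm j)) with hF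
      have hswap : (∑ i, ∑ j, F i j) = ∑ i, ∑ j, F j i := Finset.sum_comm
      have hpair : ∀ i j, 0 ≤ F i j + F j i := by
        intro i j
        by_cases h : i = j
        · subst h; simp [hF]
        · have hψi := hψ i
          have hψj := hψ j
          have hr := hoff i j h
          have hsym' := hsym i j
          have hnn : 0 ≤ nrm i := norm_nonneg _
          have key3 : F i j + F j i
              = (-(r i j)) / (ψ i * ψ j) * (ψ j * nrm i - ψ i * nrm j) ^ 2 := by
            simp only [hF, if_neg h, if_neg (Ne.symm h), ← hsym']
            field_simp
            ring
          rw [key3]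
          apply mul_nonneg (div_nonneg (by linarith) (by positivity)) (sq_nonneg _)
      have h2 : 0 ≤ ∑ i, ∑ j, (F i j + F j i) := by
        refine Finset.sum_nonneg fun i _ => Finset.sum_nonneg fun j _ => hpair i j
      have h3 : (∑ i, ∑ j, (F i j + F j i)) = (∑ i, ∑ j, F i j) + ∑ i, ∑ j, F j i := by
        rw [← Finset.sum_add_distrib]
        exact Finset.sum_congr rfl fun i _ => by rw [← Finset.sum_add_distrib]
      rw [h3, ← hswap] at h2
      linarith
    rw [Complex.le_def]
    constructor
    · simpa using hre
    · simp [him]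

def spv (N : ℕ) (k : Fin (N + 1)) : ℝ :=
  Real.sqrt (Sval N * (Sval N + 1) - mval N k * (mval N k + 1))
def smv (N : ℕ) (k : Fin (N + 1)) : ℝ :=
  Real.sqrt (Sval N * (Sval N + 1) - mval N k * (mval N k - 1))

def rE (N : ℕ) (q : ℝ) (p p' : Fin (N + 1) × Fin (N + 1)) : ℝ :=
  (if p.1 = p'.1 ∧ p.2 = p'.2 then
     Sval N ^ 2 - mval N p.1 * mval N p.2
       + Sval N * Real.sqrt (1 - 1 / (Delta q) ^ 2) * (mval N p.1 - mval N p.2) else 0)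
  - (Delta q)⁻¹ * (1 / 2) *
    ((if (p.1 : ℕ) + 1 = (p'.1 : ℕ) then spv N p'.1 else 0) *
       (if (p.2 : ℕ) = (p'.2 : ℕ) + 1 then smv N p'.2 else 0)
     + (if (p.1 : ℕ) = (p'.1 : ℕ) + 1 then smv N p'.1 else 0) *
       (if (p.2 : ℕ) + 1 = (p'.2 : ℕ) then spv N p'.2 else 0))

lemma quarter : (1 / (2 * Complex.I) : ℂ) * (1 / (2 * Complex.I)) = -(1 / 4) := by
  rw [div_mul_div_comm, one_mul, mul_mul_mul_comm]
  rw [Complex.I_mul_I]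
  norm_num

lemma scalar_id (x y z w : ℂ) :
    (1 / 2 * (x + y)) * (1 / 2 * (z + w))
      + (1 / (2 * Complex.I) * (x - y)) * (1 / (2 * Complex.I) * (z - w))
      = 1 / 2 * (x * w + y * z) := by
  linear_combination (x - y) * (z - w) * quarter

lemma S1S1_add_S2S2 (N : ℕ) :
    S1S N ⊗ₖ S1S N + S2S N ⊗ₖ S2S N
      = (1 / 2 : ℂ) • (SplusS N ⊗ₖ SminusS N + SminusS N ⊗ₖ SplusS N) := by
  ext p p'
  simp only [S1S, S2S, Matrix.add_apply, Matrix.sub_apply, Matrix.smul_apply,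
    Matrix.kroneckerMap_apply, smul_eq_mul]
  exact scalar_id _ _ _ _

set_option maxHeartbeats 1600000 in
lemma hSpin_apply (N : ℕ) (q : ℝ) (p p' : Fin (N + 1) × Fin (N + 1)) :
    hSpin N q p p' = (rE N q p p' : ℂ) := by
  obtain ⟨a, b⟩ := p
  obtain ⟨k, l⟩ := p'
  rw [hSpin, S1S1_add_S2S2]
  simp only [rE, Matrix.add_apply, Matrix.sub_apply, Matrix.smul_apply,
    Matrix.kroneckerMap_apply, smul_eq_mul, Matrix.one_apply, Matrix.diagonal_apply,
    S3S, SplusS, SminusS, spv, smv, Prod.mk.injEq, Fin.ext_iff]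
  push_cast
  split_ifs
  all_goals try (exfalso; omega)
  all_goals (push_cast; ring)

def uR (N k : ℕ) : ℝ := Real.sqrt (N.choose k : ℝ)
def psiF (N : ℕ) (q : ℝ) (p : Fin (N + 1) × Fin (N + 1)) : ℝ :=
  q ^ (p.2 : ℕ) * (uR N (p.1 : ℕ) * uR N (p.2 : ℕ))

lemma spv_eq (N : ℕ) (k : Fin (N + 1)) :
    spv N k = Real.sqrt ((k : ℕ) * ((N : ℝ) + 1 - (k : ℕ))) := by
  unfold spv mval Sval; congr 1; ring

lemma smv_eq (N : ℕ) (k : Fin (N + 1)) :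
    smv N k = Real.sqrt (((N : ℝ) - (k : ℕ)) * ((k : ℕ) + 1)) := by
  unfold smv mval Sval; congr 1; ring

-- symmetry helpers
lemma spv_smv (N : ℕ) (a k : Fin (N + 1)) (h : (a : ℕ) + 1 = (k : ℕ)) :
    spv N k = smv N a := by
  rw [spv_eq, smv_eq]
  congr 1
  have : ((k : ℕ) : ℝ) = ((a : ℕ) : ℝ) + 1 := by exact_mod_cast h.symm
  rw [this]; ring

lemma rE_symm (N : ℕ) (q : ℝ) (p p' : Fin (N + 1) × Fin (N + 1)) :
    rE N q p p' = rE N q p' p := by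
  obtain ⟨a, b⟩ := p
  obtain ⟨k, l⟩ := p'
  unfold rE
  have e1 : (if (a : ℕ) + 1 = (k : ℕ) then spv N k else 0)
      = (if (k : ℕ) = (a : ℕ) + 1 then smv N a else 0) := by
    by_cases h : (a : ℕ) + 1 = (k : ℕ)
    · rw [if_pos h, if_pos h.symm, spv_smv N a k h]
    · rw [if_neg h, if_neg fun hh => h hh.symm]
  have e2 : (if (b : ℕ) = (l : ℕ) + 1 then smv N l else 0)
      = (if (l : ℕ) + 1 = (b : ℕ) then spv N b else 0) := by
    by_cases h : (l : ℕ) + 1 = (b : ℕ)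
    · rw [if_pos h.symm, if_pos h, spv_smv N l b h]
    · rw [if_neg fun hh => h hh.symm, if_neg h]
  have e3 : (if (a : ℕ) = (k : ℕ) + 1 then smv N k else 0)
      = (if (k : ℕ) + 1 = (a : ℕ) then spv N a else 0) := by
    by_cases h : (k : ℕ) + 1 = (a : ℕ)
    · rw [if_pos h.symm, if_pos h, spv_smv N k a h]
    · rw [if_neg fun hh => h hh.symm, if_neg h]
  have e4 : (if (b : ℕ) + 1 = (l : ℕ) then spv N l else 0)
      = (if (l : ℕ) = (b : ℕ) + 1 then smv N b else 0) := by
    by_cases h : (b : ℕ) + 1 = (l : ℕ)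
    · rw [if_pos h, if_pos h.symm, spv_smv N b l h]
    · rw [if_neg h, if_neg fun hh => h hh.symm]
  simp only at e1 e2 e3 e4 ⊢
  rw [e1, e2, e3, e4]
  have ed : (if a = k ∧ b = l then
      Sval N ^ 2 - mval N a * mval N b
        + Sval N * Real.sqrt (1 - 1 / (Delta q) ^ 2) * (mval N a - mval N b) else 0)
      = (if k = a ∧ l = b then
      Sval N ^ 2 - mval N k * mval N l
        + Sval N * Real.sqrt (1 - 1 / (Delta q) ^ 2) * (mval N k - mval N l) else 0) := by
    by_cases h1 : a = k
    · by_cases h2 : b = l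
      · subst h1; subst h2; simp
      · rw [if_neg (fun hc => h2 hc.2), if_neg (fun hc => h2 hc.2.symm)]
    · rw [if_neg (fun hc => h1 hc.1), if_neg (fun hc => h1 hc.1.symm)]
  rw [ed]
  ring

lemma rE_offdiag (N : ℕ) (q : ℝ) (hq0 : 0 < q) (p p' : Fin (N + 1) × Fin (N + 1))
    (hne : p ≠ p') : rE N q p p' ≤ 0 := by
  have hΔ : 0 < Delta q := by
    unfold Delta
    have : 0 < q⁻¹ := inv_pos.2 hq0
    linarith
  unfold rE
  rw [if_neg (by
    intro hc
    exact hne (Prod.ext hc.1 hc.2))]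
  have h1 : 0 ≤ (Delta q)⁻¹ * (1 / 2) := by positivity
  have h2 : ∀ (c : Prop) (_ : Decidable c) (x : ℝ), 0 ≤ x → 0 ≤ (if c then x else 0) := by
    intro c _ x hx; split_ifs <;> simp [hx]
  have h3 : 0 ≤ (if (p.1 : ℕ) + 1 = (p'.1 : ℕ) then spv N p'.1 else 0) *
       (if (p.2 : ℕ) = (p'.2 : ℕ) + 1 then smv N p'.2 else 0)
     + (if (p.1 : ℕ) = (p'.1 : ℕ) + 1 then smv N p'.1 else 0) *
       (if (p.2 : ℕ) + 1 = (p'.2 : ℕ) then spv N p'.2 else 0) := by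
    apply add_nonneg <;> apply mul_nonneg <;>
      apply h2 <;> first | exact Real.sqrt_nonneg _ | infer_instance
  nlinarith [mul_nonneg h1 h3]

lemma psiF_pos (N : ℕ) (q : ℝ) (hq0 : 0 < q) (p : Fin (N + 1) × Fin (N + 1)) :
    0 < psiF N q p := by
  unfold psiF uR
  have h1 : 0 < (N.choose (p.1 : ℕ) : ℝ) := by
    exact_mod_cast Nat.choose_pos (by omega : (p.1 : ℕ) ≤ N)
  have h2 : 0 < (N.choose (p.2 : ℕ) : ℝ) := by
    exact_mod_cast Nat.choose_pos (by omega : (p.2 : ℕ) ≤ N)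
  positivity

lemma Delta_eq (q : ℝ) (hq0 : 0 < q) : Delta q = (1 + q ^ 2) / (2 * q) := by
  unfold Delta; field_simp; ring

lemma Delta_pos (q : ℝ) (hq0 : 0 < q) : 0 < Delta q := by
  rw [Delta_eq q hq0]; positivity

lemma Delta_inv (q : ℝ) (hq0 : 0 < q) : (Delta q)⁻¹ = 2 * q / (1 + q ^ 2) := by
  rw [Delta_eq q hq0, inv_div]

lemma sqrtA (q : ℝ) (hq0 : 0 < q) (hq1 : q < 1) :
    Real.sqrt (1 - 1 / (Delta q) ^ 2) = (1 - q ^ 2) / (1 + q ^ 2) := by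
  have h2 : (1 : ℝ) + q ^ 2 ≠ 0 := by positivity
  have h1 : 1 - 1 / (Delta q) ^ 2 = ((1 - q ^ 2) / (1 + q ^ 2)) ^ 2 := by
    rw [Delta_eq q hq0]
    field_simp
    ring
  rw [h1, Real.sqrt_sq]
  apply div_nonneg (by nlinarith) (by positivity)

lemma sp_u (N : ℕ) (a : Fin (N + 1)) (k : Fin (N + 1)) (hk : (k : ℕ) = (a : ℕ) + 1) :
    spv N k * uR N (k : ℕ) = ((N : ℝ) - (a : ℕ)) * uR N (a : ℕ) := by
  have haN : (a : ℕ) ≤ N := by omega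
  have hkN : (k : ℕ) ≤ N := by omega
  have hx : (0:ℝ) ≤ ((k : ℕ) : ℝ) * ((N : ℝ) + 1 - (k : ℕ)) := by
    apply mul_nonneg (by positivity)
    have : ((k:ℕ) : ℝ) ≤ (N : ℝ) := by exact_mod_cast hkN
    linarith
  rw [spv_eq, uR, uR, ← Real.sqrt_mul hx]
  have harg : ((k : ℕ) : ℝ) * ((N : ℝ) + 1 - (k : ℕ)) * ((N.choose (k : ℕ)) : ℝ)
      = ((N : ℝ) - (a : ℕ)) ^ 2 * ((N.choose (a : ℕ)) : ℝ) := by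
    rw [hk]
    have hnat := Nat.choose_succ_right_eq N (a : ℕ)
    have hcast : ((N.choose ((a : ℕ) + 1)) : ℝ) * ((a : ℕ) + 1)
        = ((N.choose (a : ℕ)) : ℝ) * ((N : ℝ) - (a : ℕ)) := by
      have : ((N - (a : ℕ) : ℕ) : ℝ) = (N : ℝ) - (a : ℕ) := by
        rw [Nat.cast_sub haN]
      rw [← this]
      exact_mod_cast congrArg (Nat.cast : ℕ → ℝ) hnat
    push_cast
    nlinarith [hcast]
  rw [harg, Real.sqrt_mul (by positivity), Real.sqrt_sq (by
    have : ((a : ℕ) : ℝ) ≤ (N : ℝ) := by exact_mod_cast haN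
    linarith)]

lemma sm_u (N : ℕ) (a : Fin (N + 1)) (k : Fin (N + 1)) (hk : (a : ℕ) = (k : ℕ) + 1) :
    smv N k * uR N (k : ℕ) = ((a : ℕ) : ℝ) * uR N (a : ℕ) := by
  have haN : (a : ℕ) ≤ N := by omega
  have hkN' : (k : ℕ) ≤ N := by omega
  have hx : (0:ℝ) ≤ ((N : ℝ) - (k : ℕ)) * (((k : ℕ) : ℝ) + 1) := by
    apply mul_nonneg _ (by positivity)
    have : ((k:ℕ) : ℝ) ≤ (N : ℝ) := by exact_mod_cast hkN'
    linarith
  rw [smv_eq, uR, uR, ← Real.sqrt_mul hx]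
  have harg : ((N : ℝ) - (k : ℕ)) * (((k : ℕ) : ℝ) + 1) * ((N.choose (k : ℕ)) : ℝ)
      = ((a : ℕ) : ℝ) ^ 2 * ((N.choose (a : ℕ)) : ℝ) := by
    have hkN : (k : ℕ) ≤ N := by omega
    have hnat := Nat.choose_succ_right_eq N (k : ℕ)
    have hcast : ((N.choose ((k : ℕ) + 1)) : ℝ) * ((k : ℕ) + 1)
        = ((N.choose (k : ℕ)) : ℝ) * ((N : ℝ) - (k : ℕ)) := by
      have : ((N - (k : ℕ) : ℕ) : ℝ) = (N : ℝ) - (k : ℕ) := by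
        rw [Nat.cast_sub hkN]
      rw [← this]
      exact_mod_cast congrArg (Nat.cast : ℕ → ℝ) hnat
    have hka : (k : ℕ) + 1 = (a : ℕ) := hk.symm
    rw [hka] at hcast
    have hareal : ((a:ℕ) : ℝ) = ((k:ℕ) : ℝ) + 1 := by exact_mod_cast hk
    linear_combination (-(((k:ℕ):ℝ)+1)) * hcast
      - ((N.choose (a:ℕ) : ℝ) * (((a:ℕ):ℝ) + ((k:ℕ):ℝ) + 1)) * hareal
  rw [harg, Real.sqrt_mul (by positivity), Real.sqrt_sq (by positivity)]

lemma sumPlus (N : ℕ) (t : ℝ) (a : Fin (N + 1)) :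
    (∑ k : Fin (N + 1), if (a : ℕ) + 1 = (k : ℕ) then spv N k * (t ^ (k : ℕ) * uR N (k : ℕ)) else 0)
      = ((N : ℝ) - (a : ℕ)) * (t ^ ((a : ℕ) + 1) * uR N (a : ℕ)) := by
  by_cases h : (a : ℕ) < N
  · have hmem : ((a : ℕ) + 1) < N + 1 := by omega
    rw [Finset.sum_eq_single (⟨(a : ℕ) + 1, hmem⟩ : Fin (N + 1))]
    · rw [if_pos rfl]
      have := sp_u N a ⟨(a : ℕ) + 1, hmem⟩ rfl
      simp only [Fin.val_mk] at this ⊢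
      rw [show spv N ⟨(a:ℕ)+1, hmem⟩ * (t ^ ((a:ℕ)+1) * uR N ((a:ℕ)+1))
          = (spv N ⟨(a:ℕ)+1, hmem⟩ * uR N ((a:ℕ)+1)) * t ^ ((a:ℕ)+1) by ring, this]
      ring
    · intro k _ hne
      rw [if_neg]
      intro hc
      apply hne
      exact Fin.ext (by simpa using hc.symm)
    · intro hnot
      exact absurd (Finset.mem_univ _) hnot
  · have ha : (a : ℕ) = N := by omega
    rw [Finset.sum_eq_zero, ha]
    · have : ((N : ℝ) - (N : ℕ)) = 0 := by simp
      rw [this]; ring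
    · intro k _
      rw [if_neg]
      have : (k : ℕ) < N + 1 := k.isLt
      omega

lemma sumMinus (N : ℕ) (t : ℝ) (a : Fin (N + 1)) :
    (∑ k : Fin (N + 1), if (a : ℕ) = (k : ℕ) + 1 then smv N k * (t ^ (k : ℕ) * uR N (k : ℕ)) else 0)
      = ((a : ℕ) : ℝ) * (t ^ ((a : ℕ) - 1) * uR N (a : ℕ)) := by
  rcases Nat.eq_zero_or_pos (a : ℕ) with ha | ha
  · rw [Finset.sum_eq_zero, ha]
    · simp
    · intro k _
      rw [if_neg]
      omega
  · have hmem : ((a : ℕ) - 1) < N + 1 := by omega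
    rw [Finset.sum_eq_single (⟨(a : ℕ) - 1, hmem⟩ : Fin (N + 1))]
    · rw [if_pos (by simp; omega)]
      have := sm_u N a ⟨(a : ℕ) - 1, hmem⟩ (by simp; omega)
      simp only [Fin.val_mk] at this ⊢
      rw [show smv N ⟨(a:ℕ)-1, hmem⟩ * (t ^ ((a:ℕ)-1) * uR N ((a:ℕ)-1))
          = (smv N ⟨(a:ℕ)-1, hmem⟩ * uR N ((a:ℕ)-1)) * t ^ ((a:ℕ)-1) by ring, this]
      ring
    · intro k _ hne
      rw [if_neg]
      intro hc
      apply hne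
      exact Fin.ext (by simp; omega)
    · intro hnot
      exact absurd (Finset.mem_univ _) hnot

set_option maxHeartbeats 1600000 in
lemma rE_ker (N : ℕ) (q : ℝ) (hq0 : 0 < q) (hq1 : q < 1)
    (p : Fin (N + 1) × Fin (N + 1)) :
    ∑ p' : Fin (N + 1) × Fin (N + 1), rE N q p p' * psiF N q p' = 0 := by
  obtain ⟨a, b⟩ := p
  rw [Fintype.sum_prod_type]
  set c := (Delta q)⁻¹ * (1 / 2) with hc
  set D := Sval N ^ 2 - mval N a * mval N b
      + Sval N * Real.sqrt (1 - 1 / (Delta q) ^ 2) * (mval N a - mval N b) with hD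
  set B1 : Fin (N + 1) → ℝ := fun k =>
    if (a : ℕ) + 1 = (k : ℕ) then spv N k * ((1 : ℝ) ^ (k : ℕ) * uR N (k : ℕ)) else 0 with hB1
  set B2 : Fin (N + 1) → ℝ := fun k =>
    if (a : ℕ) = (k : ℕ) + 1 then smv N k * ((1 : ℝ) ^ (k : ℕ) * uR N (k : ℕ)) else 0 with hB2
  set C1 : Fin (N + 1) → ℝ := fun l =>
    if (b : ℕ) = (l : ℕ) + 1 then smv N l * (q ^ (l : ℕ) * uR N (l : ℕ)) else 0 with hC1
  set C2 : Fin (N + 1) → ℝ := fun l =>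
    if (b : ℕ) + 1 = (l : ℕ) then spv N l * (q ^ (l : ℕ) * uR N (l : ℕ)) else 0 with hC2
  have hpoint : ∀ (k l : Fin (N + 1)), rE N q (a, b) (k, l) * psiF N q (k, l)
      = (if b = l then (if a = k then D * psiF N q (k, l) else 0) else 0)
        - c * (B1 k * C1 l + B2 k * C2 l) := by
    intro k l
    simp only [rE, psiF, hB1, hB2, hC1, hC2, hD, hc]
    split_ifs
    all_goals try tauto
    all_goals (push_cast; ring)
  rw [Finset.sum_congr rfl (fun k _ => Finset.sum_congr rfl fun l _ => hpoint k l)]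
  have hS1 := sumMinus N q b
  have hS2 := sumPlus N q b
  have hB1s := sumPlus N 1 a
  have hB2s := sumMinus N 1 a
  have hrw : ∀ k : Fin (N + 1),
      (∑ l, ((if b = l then (if a = k then D * psiF N q (k, l) else 0) else 0)
        - c * (B1 k * C1 l + B2 k * C2 l)))
      = (if a = k then D * psiF N q (k, b) else 0)
        - c * (B1 k * (((b : ℕ) : ℝ) * (q ^ ((b : ℕ) - 1) * uR N (b : ℕ)))
              + B2 k * (((N : ℝ) - (b : ℕ)) * (q ^ ((b : ℕ) + 1) * uR N (b : ℕ)))) := by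
    intro k
    rw [Finset.sum_sub_distrib]
    congr 1
    · rw [Finset.sum_ite_eq]
      simp
    · rw [← Finset.mul_sum]
      congr 1
      rw [Finset.sum_add_distrib, ← Finset.mul_sum, ← Finset.mul_sum, hC1, hC2, hS1, hS2]
  rw [Finset.sum_congr rfl fun k _ => hrw k, Finset.sum_sub_distrib, Finset.sum_ite_eq]
  simp only [Finset.mem_univ, if_pos]
  rw [← Finset.mul_sum, Finset.sum_add_distrib, ← Finset.sum_mul, ← Finset.sum_mul,
    hB1, hB2, hB1s, hB2s]
  -- final scalar identity
  rw [hD, hc, psiF]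
  simp only [one_pow]
  unfold mval Sval uR
  rw [sqrtA q hq0 hq1, Delta_inv q hq0]
  have hq2 : (1 : ℝ) + q ^ 2 ≠ 0 := by positivity
  have hqne : q ≠ 0 := ne_of_gt hq0
  rcases Nat.eq_zero_or_pos (b : ℕ) with hb | hb
  · rw [hb]
    push_cast
    field_simp
    ring
  · obtain ⟨b', hb'⟩ : ∃ b'', (b : ℕ) = b'' + 1 := ⟨(b : ℕ) - 1, by omega⟩
    rw [hb']
    simp only [Nat.add_sub_cancel]
    push_cast
    rw [pow_succ]
    field_simp
    ring

/-- Let `S ∈ (1/2)ℕ`, `S ≥ 1/2` (i.e. `N = 2S ≥ 1`), `q ∈ (0,1)`,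
`Δ = (q + q⁻¹)/2`. The spin-S two-site kink Hamiltonian `h_S(Δ)` is a Hermitian
positive semidefinite operator on `ℂ^{2S+1}⊗ℂ^{2S+1}`. -/
theorem hSpin_isHermitian_posSemidef (N : ℕ) (hN : 1 ≤ N) (q : ℝ)
    (hq0 : 0 < q) (hq1 : q < 1) :
    (hSpin N q).IsHermitian ∧ (hSpin N q).PosSemidef := by
  have psd : (hSpin N q).PosSemidef := by
    apply key (hSpin N q) (rE N q) (psiF N q)
    · exact hSpin_apply N q
    · exact rE_symm N q
    · exact fun p p' h => rE_offdiag N q hq0 p p' h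
    · exact psiF_pos N q hq0
    · exact rE_ker N q hq0 hq1
  exact ⟨psd.1, psd⟩
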